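/- Let $s \in (0,1)$, $\lambda > 0$, and let $\phi : (0,\infty) \to \mathbb C$ be bounded and continuously differentiable with $\phi'$ bounded. Set $F(\lambda) := \frac{\lambda^{2s}}{\Gamma(s)4^{s}}\int_0^\infty r^{-s-1} e^{-\lambda^2/(4r)}\phi(r)\,dr$. Then $F''(\lambda) + \frac{1-2s}{\lambda}F'(\lambda) = -\frac{\lambda^{2s}}{\Gamma(s)4^{s}}\int_0^\infty \phi'(r)\, e^{-\lambda^2/(4r)}r^{-s-1}\,dr$, where the key identity used is $\frac{d}{dr}\left(e^{-\lambda^2/(4r)} r^{-s-1}\right) = \left(\frac{\lambda^2}{4r^2} - \frac{s+1}{r}\right)e^{-\lambda^2/(4r)} r^{-s-1}$ together with integration by parts (the boundary terms at $0$ and $\infty$ vanish). -/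

import Mathlib

open MeasureTheory Set

section Stmt13AuxSection
open Filter

namespace Stmt13Aux



lemma exp_neg_le (c r : ℝ) (hc : 0 < c) (hr : 0 < r) :
    Real.exp (-c / r) ≤ 256 * r ^ 4 / c ^ 4 := by
  have hx : (0:ℝ) < c / (4 * r) := by positivity
  have h1 : c / (4 * r) ≤ Real.exp (c / (4 * r)) :=
    le_trans (by linarith [ (0:ℝ) ]) (Real.add_one_le_exp _)
  have h2 : (c / (4 * r)) ^ 4 ≤ Real.exp (c / (4 * r)) ^ 4 :=
    pow_le_pow_left₀ hx.le h1 4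
  have h3 : Real.exp (c / (4 * r)) ^ 4 = Real.exp (c / r) := by
    rw [← Real.exp_nat_mul]
    congr 1; field_simp; ring
  have h4 : (c / (4 * r)) ^ 4 ≤ Real.exp (c / r) := h3 ▸ h2
  have h5 : Real.exp (-c / r) = (Real.exp (c / r))⁻¹ := by
    rw [← Real.exp_neg]; congr 1; ring
  rw [h5]
  have h6 : (Real.exp (c / r))⁻¹ ≤ ((c / (4 * r)) ^ 4)⁻¹ := by
    apply inv_anti₀ (by positivity) h4
  refine h6.trans_eq ?_
  field_simp
  ring

/-- bound on (0,1]: r^(-a) * exp (-c/r) ≤ (256/c^4) * r^(4-a) -/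
lemma kernel_le (a c r : ℝ) (hc : 0 < c) (hr : 0 < r) :
    r ^ (-a) * Real.exp (-c / r) ≤ 256 / c ^ 4 * r ^ (4 - a) := by
  have h := exp_neg_le c r hc hr
  have : r ^ (-a) * Real.exp (-c / r) ≤ r ^ (-a) * (256 * r ^ 4 / c ^ 4) := by
    exact mul_le_mul_of_nonneg_left h (Real.rpow_nonneg hr.le _)
  refine this.trans_eq ?_
  have e1 : r ^ (4 - a) = r ^ (4:ℕ) * r ^ (-a) := by
    rw [sub_eq_add_neg, Real.rpow_add hr, ← Real.rpow_natCast r 4]; norm_num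
  rw [e1]; ring

lemma integrable_kernel (a c : ℝ) (ha : 1 < a) (ha4 : a ≤ 4) (hc : 0 < c) :
    IntegrableOn (fun r : ℝ => r ^ (-a) * Real.exp (-c / r)) (Ioi 0) := by
  have hcont : ContinuousOn (fun r : ℝ => r ^ (-a) * Real.exp (-c / r)) (Ioi 0) := by
    apply ContinuousOn.mul
    · intro x hx
      exact (Real.continuousAt_rpow_const x (-a) (Or.inl (ne_of_gt hx))).continuousWithinAt
    · apply Real.continuous_exp.comp_continuousOn
      apply ContinuousOn.div continuousOn_const continuousOn_id
      intro x hx; exact ne_of_gt hx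
  have hsub : Ioi (0:ℝ) ⊆ Ioc 0 1 ∪ Ioi 1 := by
    intro x hx
    rcases le_or_gt x 1 with h | h
    · exact Or.inl ⟨hx, h⟩
    · exact Or.inr h
  refine IntegrableOn.mono_set ?_ hsub
  apply IntegrableOn.union
  · -- bounded on Ioc 0 1
    refine Integrable.mono' (g := fun _ : ℝ => 256 / c ^ 4) ?_ ?_ ?_
    · exact integrableOn_const measure_Ioc_lt_top.ne
    · exact (hcont.mono Ioc_subset_Ioi_self).aestronglyMeasurable measurableSet_Ioc
    · filter_upwards [ae_restrict_mem measurableSet_Ioc] with r hr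
      have hr0 : 0 < r := hr.1
      have h1 : r ^ (-a) * Real.exp (-c / r) ≤ 256 / c ^ 4 * r ^ (4 - a) :=
        kernel_le a c r hc hr0
      have h2 : r ^ (4 - a) ≤ 1 := by
        apply Real.rpow_le_one hr0.le hr.2 (by linarith)
      have h3 : (0:ℝ) ≤ r ^ (-a) * Real.exp (-c / r) := by positivity
      rw [Real.norm_eq_abs, abs_of_nonneg h3]
      calc r ^ (-a) * Real.exp (-c / r) ≤ 256 / c ^ 4 * r ^ (4 - a) := h1
        _ ≤ 256 / c ^ 4 * 1 := by
            apply mul_le_mul_of_nonneg_left h2 (by positivity)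
        _ = 256 / c ^ 4 := mul_one _
  · -- dominated by r^(-a) on Ioi 1
    refine Integrable.mono' (g := fun r : ℝ => r ^ (-a)) ?_ ?_ ?_
    · exact integrableOn_Ioi_rpow_of_lt (by linarith) one_pos
    · exact (hcont.mono (Ioi_subset_Ioi one_pos.le)).aestronglyMeasurable measurableSet_Ioi
    · filter_upwards [ae_restrict_mem measurableSet_Ioi] with r hr
      have hr0 : (0:ℝ) < r := lt_trans one_pos hr
      have h3 : (0:ℝ) ≤ r ^ (-a) * Real.exp (-c / r) := by positivity
      rw [Real.norm_eq_abs, abs_of_nonneg h3]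
      calc r ^ (-a) * Real.exp (-c / r) ≤ r ^ (-a) * 1 := by
            apply mul_le_mul_of_nonneg_left _ (by positivity)
            exact Real.exp_le_one_iff.2
              (div_nonpos_of_nonpos_of_nonneg (neg_nonpos.2 hc.le) hr0.le)
        _ = r ^ (-a) := mul_one _

lemma tendsto_kernel_zero (a c : ℝ) (ha4 : a < 4) (hc : 0 < c) :
    Tendsto (fun r : ℝ => r ^ (-a) * Real.exp (-c / r)) (nhdsWithin 0 (Ioi 0)) (nhds 0) := by
  have hb : Tendsto (fun r : ℝ => 256 / c ^ 4 * r ^ (4 - a)) (nhdsWithin 0 (Ioi 0)) (nhds 0) := by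
    have : Tendsto (fun r : ℝ => r ^ (4 - a)) (nhdsWithin 0 (Ioi 0)) (nhds 0) := by
      have hcont : ContinuousAt (fun r : ℝ => r ^ (4 - a)) 0 :=
        Real.continuousAt_rpow_const 0 (4 - a) (Or.inr (by linarith))
      have := hcont.continuousWithinAt (s := Ioi 0)
      simpa [Real.zero_rpow (by linarith : (4:ℝ) - a ≠ 0)] using this.tendsto
    simpa using this.const_mul (256 / c ^ 4)
  apply squeeze_zero_norm' _ hb
  filter_upwards [self_mem_nhdsWithin] with r hr
  have hr0 : (0:ℝ) < r := hr
  have h3 : (0:ℝ) ≤ r ^ (-a) * Real.exp (-c / r) := by positivity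
  rw [Real.norm_eq_abs, abs_of_nonneg h3]
  exact kernel_le a c r hc hr0

lemma tendsto_kernel_atTop (a c : ℝ) (ha : 0 < a) (hc : 0 ≤ c) :
    Tendsto (fun r : ℝ => r ^ (-a) * Real.exp (-c / r)) atTop (nhds 0) := by
  apply squeeze_zero_norm' _ (tendsto_rpow_neg_atTop ha)
  filter_upwards [Filter.eventually_gt_atTop (0:ℝ)] with r hr
  have h3 : (0:ℝ) ≤ r ^ (-a) * Real.exp (-c / r) := by positivity
  rw [Real.norm_eq_abs, abs_of_nonneg h3]
  calc r ^ (-a) * Real.exp (-c / r) ≤ r ^ (-a) * 1 := by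
        apply mul_le_mul_of_nonneg_left _ (by positivity)
        apply Real.exp_le_one_iff.2
        exact div_nonpos_of_nonpos_of_nonneg (neg_nonpos.2 hc) hr.le
    _ = r ^ (-a) := mul_one _


lemma hasDerivAt_inner_r (l r : ℝ) (hr : 0 < r) :
    HasDerivAt (fun ρ : ℝ => -(l ^ 2) / (4 * ρ)) (l ^ 2 / (4 * r ^ 2)) r := by
  have h := (hasDerivAt_inv (ne_of_gt hr)).const_mul (-(l ^ 2) / 4)
  have heq : (fun ρ : ℝ => -(l ^ 2) / (4 * ρ)) = fun ρ : ℝ => -(l ^ 2) / 4 * ρ⁻¹ := by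
    funext ρ; simp [div_eq_mul_inv, mul_inv]; ring
  have hval : -(l ^ 2) / 4 * -(r ^ 2)⁻¹ = l ^ 2 / (4 * r ^ 2) := by
    field_simp
  rw [heq]; rw [← hval]; exact h

/-- the second conjunct of the theorem -/
lemma hasDerivAt_kernel_r (s l r : ℝ) (hr : 0 < r) :
    HasDerivAt (fun ρ : ℝ => Real.exp (-(l ^ 2) / (4 * ρ)) * ρ ^ (-s - 1))
      ((l ^ 2 / (4 * r ^ 2) - (s + 1) / r) * (Real.exp (-(l ^ 2) / (4 * r)) * r ^ (-s - 1))) r := by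
  have h1 := (hasDerivAt_inner_r l r hr).exp
  have h2 : HasDerivAt (fun ρ : ℝ => ρ ^ (-s - 1)) ((-s - 1) * r ^ (-s - 1 - 1)) r :=
    Real.hasDerivAt_rpow_const (Or.inl (ne_of_gt hr))
  have h := h1.mul h2
  refine h.congr_deriv ?_
  have hpow : r ^ (-s - 1 - 1) = r ^ (-s - 1) / r := by
    rw [Real.rpow_sub hr, Real.rpow_one]
  rw [hpow]
  field_simp
  ring

lemma hasDerivAt_K0_l (s r : ℝ) (hr : 0 < r) (l : ℝ) :
    HasDerivAt (fun l : ℝ => r ^ (-s - 1) * Real.exp (-(l ^ 2) / (4 * r)))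
      (-(l / (2 * r)) * (r ^ (-s - 1) * Real.exp (-(l ^ 2) / (4 * r)))) l := by
  have h0 : HasDerivAt (fun x : ℝ => -(x ^ 2) / (4 * r)) (-(l / (2 * r))) l := by
    have h := (hasDerivAt_pow 2 l).const_mul (-(1 / (4 * r)))
    have heq : (fun x : ℝ => -(x ^ 2) / (4 * r)) = fun x : ℝ => -(1 / (4 * r)) * x ^ 2 := by
      funext x; ring
    have hval : -(1 / (4 * r)) * (↑2 * l ^ (2 - 1)) = -(l / (2 * r)) := by
      norm_num; ring
    rw [heq, ← hval]; exact h
  have h := (h0.exp).const_mul (r ^ (-s - 1))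
  refine h.congr_deriv ?_
  ring

lemma hasDerivAt_K1_l (s r : ℝ) (hr : 0 < r) (l : ℝ) :
    HasDerivAt (fun l : ℝ => -(l / (2 * r)) * (r ^ (-s - 1) * Real.exp (-(l ^ 2) / (4 * r))))
      ((l ^ 2 / (4 * r ^ 2) - 1 / (2 * r)) * (r ^ (-s - 1) * Real.exp (-(l ^ 2) / (4 * r)))) l := by
  have ha : HasDerivAt (fun x : ℝ => -(x / (2 * r))) (-(1 / (2 * r))) l := by
    have h : HasDerivAt (fun x : ℝ => -(1 / (2 * r)) * x) (-(1 / (2 * r))) l := by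
      simpa using (hasDerivAt_id l).const_mul (-(1 / (2 * r)))
    have heq : (fun x : ℝ => -(x / (2 * r))) = fun x : ℝ => -(1 / (2 * r)) * x := by
      funext x; ring
    rw [heq]; exact h
  have h := ha.mul (hasDerivAt_K0_l s r hr l)
  refine h.congr_deriv ?_
  field_simp
  ring


lemma hasDerivAt_paramInt (φ : ℝ → ℂ) (M : ℝ)
    (hφ : ∀ r : ℝ, 0 < r → ‖φ r‖ ≤ M) (hφc : ContinuousOn φ (Ioi 0))
    (g g' : ℝ → ℝ → ℝ) (b : ℝ → ℝ) (l ε : ℝ) (hε : 0 < ε)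
    (hgc : ∀ x : ℝ, ContinuousOn (fun r => g x r) (Ioi 0))
    (hg'c : ContinuousOn (fun r => g' l r) (Ioi 0))
    (hgd : ∀ r : ℝ, 0 < r → ∀ x ∈ Metric.ball l ε, HasDerivAt (fun x => g x r) (g' x r) x)
    (hb : ∀ r : ℝ, 0 < r → ∀ x ∈ Metric.ball l ε, |g' x r| ≤ b r)
    (hbi : IntegrableOn b (Ioi 0))
    (hint : IntegrableOn (fun r => ((g l r : ℝ) : ℂ) * φ r) (Ioi 0)) :
    IntegrableOn (fun r => ((g' l r : ℝ) : ℂ) * φ r) (Ioi 0) ∧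
    HasDerivAt (fun x : ℝ => ∫ r in Ioi (0:ℝ), ((g x r : ℝ) : ℂ) * φ r)
      (∫ r in Ioi (0:ℝ), ((g' l r : ℝ) : ℂ) * φ r) l := by
  have key := hasDerivAt_integral_of_dominated_loc_of_deriv_le
    (F := fun x r => ((g x r : ℝ) : ℂ) * φ r) (F' := fun x r => ((g' x r : ℝ) : ℂ) * φ r)
    (μ := volume.restrict (Ioi 0)) (x₀ := l) (bound := fun r => b r * M) (Metric.ball_mem_nhds l hε)
    ?_ ?_ ?_ ?_ ?_ ?_
  · exact key
  · filter_upwards with x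
    exact ((Complex.continuous_ofReal.comp_continuousOn (hgc x)).mul
      hφc).aestronglyMeasurable measurableSet_Ioi
  · exact hint
  · exact ((Complex.continuous_ofReal.comp_continuousOn hg'c).mul
      hφc).aestronglyMeasurable measurableSet_Ioi
  · filter_upwards [ae_restrict_mem measurableSet_Ioi] with r hr
    intro x hx
    rw [norm_mul, Complex.norm_real, Real.norm_eq_abs]
    have hb0 : 0 ≤ b r := (abs_nonneg _).trans (hb r hr l (Metric.mem_ball_self hε))
    exact mul_le_mul (hb r hr x hx) (hφ r hr) (norm_nonneg _) hb0
  · exact hbi.mul_const M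
  · filter_upwards [ae_restrict_mem measurableSet_Ioi] with r hr
    intro x hx
    exact ((hgd r hr x hx).ofReal_comp).mul_const (φ r)


lemma rpow_shift1 (s r : ℝ) (hr : 0 < r) : r ^ (-(s+2)) = r ^ (-s-1) * r⁻¹ := by
  rw [show -(s+2) = (-s-1) + (-1) by ring, Real.rpow_add hr, Real.rpow_neg_one]

lemma rpow_shift2 (s r : ℝ) (hr : 0 < r) : r ^ (-(s+3)) = r ^ (-s-1) * (r⁻¹ * r⁻¹) := by
  rw [show -(s+3) = (-s-1) + (-1) + (-1) by ring, Real.rpow_add hr, Real.rpow_add hr,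
    Real.rpow_neg_one, mul_assoc]

lemma ball_pos {l x : ℝ} (hl : 0 < l) (hx : x ∈ Metric.ball l (l / 2)) :
    l / 2 < x ∧ x < 3 * l / 2 := by
  rw [Metric.mem_ball, Real.dist_eq, abs_lt] at hx
  constructor <;> linarith [hx.1, hx.2]

lemma exp_ball_le {l x r : ℝ} (hl : 0 < l) (hr : 0 < r) (hx : x ∈ Metric.ball l (l / 2)) :
    Real.exp (-(x ^ 2) / (4 * r)) ≤ Real.exp (-(l ^ 2 / 16) / r) := by
  obtain ⟨h1, h2⟩ := ball_pos hl hx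
  apply Real.exp_le_exp.2
  rw [show -(x ^ 2) / (4 * r) = -(x ^ 2 / 4) / r by ring]
  exact (div_le_div_iff_of_pos_right hr).2 (by nlinarith)

lemma contOn_K0 (s x : ℝ) :
    ContinuousOn (fun r : ℝ => r ^ (-s - 1) * Real.exp (-(x ^ 2) / (4 * r))) (Ioi 0) := by
  apply ContinuousOn.mul
  · intro y hy
    exact (Real.continuousAt_rpow_const y (-s - 1) (Or.inl (ne_of_gt hy))).continuousWithinAt
  · apply Real.continuous_exp.comp_continuousOn
    exact ContinuousOn.div continuousOn_const (by fun_prop)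
      (fun y hy => (mul_pos (by norm_num) (mem_Ioi.1 hy)).ne')

lemma integrableOn_mul_phi (φ : ℝ → ℂ) (M : ℝ)
    (hφ : ∀ r : ℝ, 0 < r → ‖φ r‖ ≤ M) (hφc : ContinuousOn φ (Ioi 0))
    (g b : ℝ → ℝ) (hgc : ContinuousOn g (Ioi 0))
    (hb : ∀ r : ℝ, 0 < r → |g r| ≤ b r) (hbi : IntegrableOn b (Ioi 0)) :
    IntegrableOn (fun r => ((g r : ℝ) : ℂ) * φ r) (Ioi 0) := by
  have hM : 0 ≤ M := le_trans (norm_nonneg _) (hφ 1 one_pos)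
  refine Integrable.mono' (g := fun r => b r * M) (hbi.mul_const M)
    (((Complex.continuous_ofReal.comp_continuousOn hgc).mul
      hφc).aestronglyMeasurable measurableSet_Ioi) ?_
  filter_upwards [ae_restrict_mem measurableSet_Ioi] with r hr
  rw [norm_mul, Complex.norm_real, Real.norm_eq_abs]
  exact mul_le_mul (hb r hr) (hφ r hr) (norm_nonneg _)
    ((abs_nonneg _).trans (hb r hr))



lemma contOn_lin (l : ℝ) : ContinuousOn (fun r : ℝ => -(l / (2 * r))) (Ioi 0) := by
  apply ContinuousOn.neg
  exact ContinuousOn.div continuousOn_const (by fun_prop)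
    (fun y hy => (mul_pos (by norm_num) (mem_Ioi.1 hy)).ne')

lemma contOn_quad (l : ℝ) :
    ContinuousOn (fun r : ℝ => l ^ 2 / (4 * r ^ 2) - 1 / (2 * r)) (Ioi 0) := by
  apply ContinuousOn.sub
  · exact ContinuousOn.div continuousOn_const (by fun_prop)
      (fun y hy => (mul_pos (by norm_num) (pow_pos (mem_Ioi.1 hy) 2)).ne')
  · exact ContinuousOn.div continuousOn_const (by fun_prop)
      (fun y hy => (mul_pos (by norm_num) (mem_Ioi.1 hy)).ne')

lemma deriv_under_A (s : ℝ) (hs0 : 0 < s) (hs1 : s < 1) (φ : ℝ → ℂ) (M : ℝ)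
    (hφ : ∀ r : ℝ, 0 < r → ‖φ r‖ ≤ M) (hφc : ContinuousOn φ (Ioi 0))
    (l : ℝ) (hl : 0 < l) :
    IntegrableOn (fun r : ℝ =>
        ((-(l / (2 * r)) * (r ^ (-s - 1) * Real.exp (-(l ^ 2) / (4 * r))) : ℝ) : ℂ) * φ r) (Ioi 0) ∧
    HasDerivAt (fun x : ℝ => ∫ r in Ioi (0:ℝ),
        ((r ^ (-s - 1) * Real.exp (-(x ^ 2) / (4 * r)) : ℝ) : ℂ) * φ r)
      (∫ r in Ioi (0:ℝ),
        ((-(l / (2 * r)) * (r ^ (-s - 1) * Real.exp (-(l ^ 2) / (4 * r))) : ℝ) : ℂ) * φ r) l := by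
  apply hasDerivAt_paramInt φ M hφ hφc
    (fun x r => r ^ (-s - 1) * Real.exp (-(x ^ 2) / (4 * r)))
    (fun x r => -(x / (2 * r)) * (r ^ (-s - 1) * Real.exp (-(x ^ 2) / (4 * r))))
    (fun r => (3 * l / 4) * (r ^ (-(s+2)) * Real.exp (-(l ^ 2 / 16) / r))) l (l/2)
    (by positivity) (fun x => contOn_K0 s x)
    ((contOn_lin l).mul (contOn_K0 s l))
    (fun r hr x _ => hasDerivAt_K0_l s r hr x) ?_ ?_ ?_
  · -- bound
    intro r hr x hx
    obtain ⟨h1, h2⟩ := ball_pos hl hx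
    have hx0 : 0 < x := lt_trans (by positivity) h1
    have hE := exp_ball_le hl hr hx
    rw [abs_mul, abs_neg, abs_div, abs_of_pos hx0, abs_of_pos (by positivity : (0:ℝ) < 2 * r),
      abs_of_pos (by positivity : (0:ℝ) < r ^ (-s-1) * Real.exp (-(x ^ 2) / (4 * r)))]
    calc x / (2 * r) * (r ^ (-s - 1) * Real.exp (-(x ^ 2) / (4 * r)))
        ≤ (3 * l / 2) / (2 * r) * (r ^ (-s - 1) * Real.exp (-(l ^ 2 / 16) / r)) := by
          apply mul_le_mul
          · apply div_le_div_of_nonneg_right h2.le (by positivity) |>.trans_eq rfl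
          · exact mul_le_mul_of_nonneg_left hE (by positivity)
          · positivity
          · positivity
      _ = (3 * l / 4) * (r ^ (-(s+2)) * Real.exp (-(l ^ 2 / 16) / r)) := by
          rw [rpow_shift1 s r hr]; field_simp; ring
  · -- bound integrable
    exact (integrable_kernel (s+2) (l^2/16) (by linarith) (by linarith) (by positivity)).const_mul _
  · -- base integrable
    apply integrableOn_mul_phi φ M hφ hφc _
      (fun r => r ^ (-(s+1)) * Real.exp (-(l ^ 2 / 4) / r)) (contOn_K0 s l) ?_
      (integrable_kernel (s+1) (l^2/4) (by linarith) (by linarith) (by positivity))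
    intro r hr
    show |r ^ (-s - 1) * Real.exp (-(l ^ 2) / (4 * r))|
      ≤ r ^ (-(s+1)) * Real.exp (-(l ^ 2 / 4) / r)
    rw [abs_of_pos (by positivity)]
    apply le_of_eq
    rw [show -(s+1) = -s-1 by ring, show -(l ^ 2 / 4) / r = -(l ^ 2) / (4 * r) by ring]

lemma deriv_under_B (s : ℝ) (hs0 : 0 < s) (hs1 : s < 1) (φ : ℝ → ℂ) (M : ℝ)
    (hφ : ∀ r : ℝ, 0 < r → ‖φ r‖ ≤ M) (hφc : ContinuousOn φ (Ioi 0))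
    (l : ℝ) (hl : 0 < l) :
    IntegrableOn (fun r : ℝ =>
        (((l ^ 2 / (4 * r ^ 2) - 1 / (2 * r)) * (r ^ (-s - 1) * Real.exp (-(l ^ 2) / (4 * r))) : ℝ) : ℂ) * φ r) (Ioi 0) ∧
    HasDerivAt (fun x : ℝ => ∫ r in Ioi (0:ℝ),
        ((-(x / (2 * r)) * (r ^ (-s - 1) * Real.exp (-(x ^ 2) / (4 * r))) : ℝ) : ℂ) * φ r)
      (∫ r in Ioi (0:ℝ),
        (((l ^ 2 / (4 * r ^ 2) - 1 / (2 * r)) * (r ^ (-s - 1) * Real.exp (-(l ^ 2) / (4 * r))) : ℝ) : ℂ) * φ r) l := by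
  apply hasDerivAt_paramInt φ M hφ hφc
    (fun x r => -(x / (2 * r)) * (r ^ (-s - 1) * Real.exp (-(x ^ 2) / (4 * r))))
    (fun x r => (x ^ 2 / (4 * r ^ 2) - 1 / (2 * r)) * (r ^ (-s - 1) * Real.exp (-(x ^ 2) / (4 * r))))
    (fun r => (9 * l ^ 2 / 16) * (r ^ (-(s+3)) * Real.exp (-(l ^ 2 / 16) / r))
      + (1 / 2) * (r ^ (-(s+2)) * Real.exp (-(l ^ 2 / 16) / r))) l (l/2)
    (by positivity) (fun x => (contOn_lin x).mul (contOn_K0 s x))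
    ((contOn_quad l).mul (contOn_K0 s l))
    (fun r hr x _ => hasDerivAt_K1_l s r hr x) ?_ ?_ ?_
  · -- bound
    intro r hr x hx
    obtain ⟨h1, h2⟩ := ball_pos hl hx
    have hx0 : 0 < x := lt_trans (by positivity) h1
    have hE := exp_ball_le hl hr hx
    have hK0 : (0:ℝ) < r ^ (-s-1) * Real.exp (-(x ^ 2) / (4 * r)) := by positivity
    rw [abs_mul, abs_of_pos hK0]
    have habs : |x ^ 2 / (4 * r ^ 2) - 1 / (2 * r)| ≤ x ^ 2 / (4 * r ^ 2) + 1 / (2 * r) := by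
      have := abs_add_le (x ^ 2 / (4 * r ^ 2)) (-(1 / (2 * r)))
      rw [← sub_eq_add_neg, abs_neg] at this
      refine this.trans ?_
      rw [abs_of_pos (by positivity : (0:ℝ) < x ^ 2 / (4 * r ^ 2)),
        abs_of_pos (by positivity : (0:ℝ) < 1 / (2 * r))]
    calc |x ^ 2 / (4 * r ^ 2) - 1 / (2 * r)| * (r ^ (-s-1) * Real.exp (-(x ^ 2) / (4 * r)))
        ≤ (x ^ 2 / (4 * r ^ 2) + 1 / (2 * r)) * (r ^ (-s-1) * Real.exp (-(x ^ 2) / (4 * r))) :=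
          mul_le_mul_of_nonneg_right habs hK0.le
      _ ≤ ((3 * l / 2) ^ 2 / (4 * r ^ 2) + 1 / (2 * r)) * (r ^ (-s-1) * Real.exp (-(l ^ 2 / 16) / r)) := by
          apply mul_le_mul
          · have hd : x ^ 2 / (4 * r ^ 2) ≤ (3 * l / 2) ^ 2 / (4 * r ^ 2) := by
              gcongr
            linarith
          · exact mul_le_mul_of_nonneg_left hE (by positivity)
          · positivity
          · positivity
      _ = (9 * l ^ 2 / 16) * (r ^ (-(s+3)) * Real.exp (-(l ^ 2 / 16) / r))
          + (1 / 2) * (r ^ (-(s+2)) * Real.exp (-(l ^ 2 / 16) / r)) := by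
          rw [rpow_shift1 s r hr, rpow_shift2 s r hr]; field_simp; ring
  · -- bound integrable
    exact ((integrable_kernel (s+3) (l^2/16) (by linarith) (by linarith)
        (by positivity)).const_mul _).add
      ((integrable_kernel (s+2) (l^2/16) (by linarith) (by linarith)
        (by positivity)).const_mul _)
  · -- base integrable
    apply integrableOn_mul_phi φ M hφ hφc _
      (fun r => (l / 2) * (r ^ (-(s+2)) * Real.exp (-(l ^ 2 / 4) / r)))
      ((contOn_lin l).mul (contOn_K0 s l)) ?_
      ((integrable_kernel (s+2) (l^2/4) (by linarith) (by linarith) (by positivity)).const_mul _)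
    intro r hr
    show |(-(l / (2 * r)) * (r ^ (-s - 1) * Real.exp (-(l ^ 2) / (4 * r))))|
      ≤ l / 2 * (r ^ (-(s+2)) * Real.exp (-(l ^ 2 / 4) / r))
    rw [abs_mul, abs_neg, abs_div, abs_of_pos hl, abs_of_pos (by positivity : (0:ℝ) < 2 * r),
      abs_of_pos (by positivity : (0:ℝ) < r ^ (-s-1) * Real.exp (-(l ^ 2) / (4 * r)))]
    apply le_of_eq
    rw [rpow_shift1 s r hr, show -(l ^ 2 / 4) / r = -(l ^ 2) / (4 * r) by ring]
    field_simp


lemma contOn_K0' (s l : ℝ) :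
    ContinuousOn (fun r : ℝ => Real.exp (-(l ^ 2) / (4 * r)) * r ^ (-s - 1)) (Ioi 0) := by
  apply ContinuousOn.mul
  · apply Real.continuous_exp.comp_continuousOn
    exact ContinuousOn.div continuousOn_const (by fun_prop)
      (fun y hy => (mul_pos (by norm_num) (mem_Ioi.1 hy)).ne')
  · intro y hy
    exact (Real.continuousAt_rpow_const y (-s - 1)
      (Or.inl (ne_of_gt (mem_Ioi.1 hy)))).continuousWithinAt

lemma contOn_quad2 (a b : ℝ) :
    ContinuousOn (fun r : ℝ => a / (4 * r ^ 2) - b / r) (Ioi 0) := by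
  apply ContinuousOn.sub
  · exact ContinuousOn.div continuousOn_const (by fun_prop)
      (fun y hy => (mul_pos (by norm_num) (pow_pos (mem_Ioi.1 hy) 2)).ne')
  · exact ContinuousOn.div continuousOn_const (by fun_prop)
      (fun y hy => (mem_Ioi.1 hy).ne')

lemma integrableOn_drK_phi (s : ℝ) (hs0 : 0 < s) (hs1 : s < 1) (φ : ℝ → ℂ) (M : ℝ)
    (hφ : ∀ r : ℝ, 0 < r → ‖φ r‖ ≤ M) (hφc : ContinuousOn φ (Ioi 0)) (l : ℝ) (hl : 0 < l) :
    IntegrableOn (fun r : ℝ =>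
      (((l ^ 2 / (4 * r ^ 2) - (s + 1) / r) * (Real.exp (-(l ^ 2) / (4 * r)) * r ^ (-s - 1)) : ℝ) : ℂ)
        * φ r) (Ioi 0) := by
  refine integrableOn_mul_phi φ M hφ hφc _
    (fun r => (l ^ 2 / 4) * (r ^ (-(s+3)) * Real.exp (-(l ^ 2 / 4) / r))
      + (s + 1) * (r ^ (-(s+2)) * Real.exp (-(l ^ 2 / 4) / r))) ?_ ?_ ?_
  · exact (contOn_quad2 (l ^ 2) (s + 1)).mul (contOn_K0' s l)
  swap
  · exact ((integrable_kernel (s+3) (l^2/4) (by linarith) (by linarith)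
        (by positivity)).const_mul _).add
      ((integrable_kernel (s+2) (l^2/4) (by linarith) (by linarith)
        (by positivity)).const_mul _)
  intro r hr
  show |(l ^ 2 / (4 * r ^ 2) - (s + 1) / r) * (Real.exp (-(l ^ 2) / (4 * r)) * r ^ (-s - 1))|
    ≤ (l ^ 2 / 4) * (r ^ (-(s+3)) * Real.exp (-(l ^ 2 / 4) / r))
      + (s + 1) * (r ^ (-(s+2)) * Real.exp (-(l ^ 2 / 4) / r))
  have hK0 : (0:ℝ) < Real.exp (-(l ^ 2) / (4 * r)) * r ^ (-s-1) := by positivity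
  rw [abs_mul, abs_of_pos hK0]
  have habs : |l ^ 2 / (4 * r ^ 2) - (s + 1) / r| ≤ l ^ 2 / (4 * r ^ 2) + (s + 1) / r := by
    have h := abs_add_le (l ^ 2 / (4 * r ^ 2)) (-((s + 1) / r))
    rw [← sub_eq_add_neg, abs_neg] at h
    refine h.trans ?_
    rw [abs_of_pos (by positivity : (0:ℝ) < l ^ 2 / (4 * r ^ 2)),
      abs_of_pos (by positivity : (0:ℝ) < (s + 1) / r)]
  calc |l ^ 2 / (4 * r ^ 2) - (s + 1) / r| * (Real.exp (-(l ^ 2) / (4 * r)) * r ^ (-s-1))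
      ≤ (l ^ 2 / (4 * r ^ 2) + (s + 1) / r) * (Real.exp (-(l ^ 2) / (4 * r)) * r ^ (-s-1)) :=
        mul_le_mul_of_nonneg_right habs hK0.le
    _ = (l ^ 2 / 4) * (r ^ (-(s+3)) * Real.exp (-(l ^ 2 / 4) / r))
        + (s + 1) * (r ^ (-(s+2)) * Real.exp (-(l ^ 2 / 4) / r)) := by
        rw [rpow_shift1 s r hr, rpow_shift2 s r hr,
          show -(l ^ 2 / 4) / r = -(l ^ 2) / (4 * r) by ring]
        field_simp

lemma integrableOn_K_psi (s : ℝ) (hs0 : 0 < s) (hs1 : s < 1) (ψ : ℝ → ℂ) (M : ℝ)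
    (hψ : ∀ r : ℝ, 0 < r → ‖ψ r‖ ≤ M) (hψc : ContinuousOn ψ (Ioi 0)) (l : ℝ) (hl : 0 < l) :
    IntegrableOn (fun r : ℝ =>
      ((Real.exp (-(l ^ 2) / (4 * r)) * r ^ (-s - 1) : ℝ) : ℂ) * ψ r) (Ioi 0) := by
  apply integrableOn_mul_phi ψ M hψ hψc _
    (fun r => r ^ (-(s+1)) * Real.exp (-(l ^ 2 / 4) / r)) (contOn_K0' s l) ?_
    (integrable_kernel (s+1) (l^2/4) (by linarith) (by linarith) (by positivity))
  intro r hr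
  show |Real.exp (-(l ^ 2) / (4 * r)) * r ^ (-s - 1)| ≤ r ^ (-(s+1)) * Real.exp (-(l ^ 2 / 4) / r)
  rw [abs_of_pos (by positivity)]
  apply le_of_eq
  rw [show -(s+1) = -s-1 by ring, show -(l ^ 2 / 4) / r = -(l ^ 2) / (4 * r) by ring]
  ring

lemma ibp (s : ℝ) (hs0 : 0 < s) (hs1 : s < 1) (φ φ' : ℝ → ℂ) (M : ℝ)
    (hφ : ∀ r : ℝ, 0 < r → ‖φ r‖ ≤ M) (hφ' : ∀ r : ℝ, 0 < r → ‖φ' r‖ ≤ M)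
    (hφd : ∀ r : ℝ, 0 < r → HasDerivAt φ (φ' r) r) (hφ'c : ContinuousOn φ' (Ioi 0))
    (l : ℝ) (hl : 0 < l) :
    (∫ r in Ioi (0:ℝ),
        (((l ^ 2 / (4 * r ^ 2) - (s + 1) / r) * (Real.exp (-(l ^ 2) / (4 * r)) * r ^ (-s - 1)) : ℝ) : ℂ)
          * φ r)
      = - ∫ r in Ioi (0:ℝ),
          ((Real.exp (-(l ^ 2) / (4 * r)) * r ^ (-s - 1) : ℝ) : ℂ) * φ' r := by
  have hM : 0 ≤ M := le_trans (norm_nonneg _) (hφ 1 one_pos)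
  have hφc : ContinuousOn φ (Ioi 0) := fun r hr => ((hφd r hr).continuousAt).continuousWithinAt
  set H : ℝ → ℂ := fun r => if 0 < r then
    ((Real.exp (-(l ^ 2) / (4 * r)) * r ^ (-s - 1) : ℝ) : ℂ) * φ r else 0 with hH
  set G : ℝ → ℂ := fun r =>
    (((l ^ 2 / (4 * r ^ 2) - (s + 1) / r) * (Real.exp (-(l ^ 2) / (4 * r)) * r ^ (-s - 1)) : ℝ) : ℂ)
      * φ r
    + ((Real.exp (-(l ^ 2) / (4 * r)) * r ^ (-s - 1) : ℝ) : ℂ) * φ' r with hG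
  have hbound : ∀ r : ℝ, 0 < r →
      ‖H r‖ ≤ M * (r ^ (-(s+1)) * Real.exp (-(l ^ 2 / 4) / r)) := by
    intro r hr
    rw [hH]
    simp only [if_pos hr]
    rw [norm_mul, Complex.norm_real, Real.norm_eq_abs,
      abs_of_pos (by positivity : (0:ℝ) < Real.exp (-(l ^ 2) / (4 * r)) * r ^ (-s - 1))]
    calc Real.exp (-(l ^ 2) / (4 * r)) * r ^ (-s - 1) * ‖φ r‖
        ≤ Real.exp (-(l ^ 2) / (4 * r)) * r ^ (-s - 1) * M :=
          mul_le_mul_of_nonneg_left (hφ r hr) (by positivity)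
      _ = M * (r ^ (-(s+1)) * Real.exp (-(l ^ 2 / 4) / r)) := by
          rw [show -(s+1) = -s-1 by ring, show -(l ^ 2 / 4) / r = -(l ^ 2) / (4 * r) by ring]
          ring
  have hkey : ∫ r in Ioi (0:ℝ), G r = 0 - H 0 := by
    apply integral_Ioi_of_hasDerivAt_of_tendsto (f := H) (f' := G) (a := 0) (m := 0)
    · -- continuity within Ici 0 at 0
      have h0 : H 0 = 0 := by rw [hH]; simp
      rw [ContinuousWithinAt, h0, ← Ioi_insert, nhdsWithin_insert]
      apply Tendsto.sup
      · simpa [h0] using tendsto_pure_nhds H 0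
      · refine squeeze_zero_norm'
          (a := fun r => M * (r ^ (-(s+1)) * Real.exp (-(l ^ 2 / 4) / r))) ?_ ?_
        · filter_upwards [self_mem_nhdsWithin] with r hr
          exact hbound r hr
        · have h := (tendsto_kernel_zero (s+1) (l^2/4) (by linarith) (by positivity)).const_mul M
          simpa using h
    · -- derivative on Ioi 0
      intro r hr
      have hd := ((hasDerivAt_kernel_r s l r hr).ofReal_comp).mul (hφd r hr)
      apply hd.congr_of_eventuallyEq
      filter_upwards [Ioi_mem_nhds hr] with y hy
      rw [hH]; simp [if_pos (mem_Ioi.1 hy)]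
    · -- integrability of G
      exact (integrableOn_drK_phi s hs0 hs1 φ M hφ hφc l hl).add
        (integrableOn_K_psi s hs0 hs1 φ' M hφ' hφ'c l hl)
    · -- tendsto atTop
      refine squeeze_zero_norm'
        (a := fun r => M * (r ^ (-(s+1)) * Real.exp (-(l ^ 2 / 4) / r))) ?_ ?_
      · filter_upwards [Filter.eventually_gt_atTop (0:ℝ)] with r hr
        exact hbound r hr
      · have h := (tendsto_kernel_atTop (s+1) (l^2/4) (by linarith) (by positivity)).const_mul M
        simpa using h
  have h0 : H 0 = 0 := by rw [hH]; simp
  rw [h0, sub_zero] at hkey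
  have hsplit : ∫ r in Ioi (0:ℝ), G r
      = (∫ r in Ioi (0:ℝ),
          (((l ^ 2 / (4 * r ^ 2) - (s + 1) / r) * (Real.exp (-(l ^ 2) / (4 * r)) * r ^ (-s - 1)) : ℝ) : ℂ)
            * φ r)
        + ∫ r in Ioi (0:ℝ),
            ((Real.exp (-(l ^ 2) / (4 * r)) * r ^ (-s - 1) : ℝ) : ℂ) * φ' r := by
    rw [hG]
    exact integral_add (integrableOn_drK_phi s hs0 hs1 φ M hφ hφc l hl)
      (integrableOn_K_psi s hs0 hs1 φ' M hφ' hφ'c l hl)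
  rw [hsplit] at hkey
  linear_combination hkey

end Stmt13Aux

/-- The extension kernel integral `F(λ) = λ^{2s}/(Γ(s)4^s) ∫_0^∞ r^{-s-1}
e^{-λ²/(4r)} φ(r) dr` of a bounded `C¹` function `φ` with bounded derivative satisfies the
degenerate ODE `F'' + (1-2s)/λ F' = -λ^{2s}/(Γ(s)4^s) ∫_0^∞ φ'(r) e^{-λ²/(4r)} r^{-s-1} dr`;
the key identity is `d/dr (e^{-λ²/(4r)} r^{-s-1}) = (λ²/(4r²) - (s+1)/r) e^{-λ²/(4r)} r^{-s-1}`. -/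
theorem stmt_13 (s : ℝ) (hs : s ∈ Set.Ioo (0:ℝ) 1)
    (φ φ' : ℝ → ℂ) (M : ℝ)
    (hφ : ∀ r : ℝ, 0 < r → ‖φ r‖ ≤ M) (hφ' : ∀ r : ℝ, 0 < r → ‖φ' r‖ ≤ M)
    (hφd : ∀ r : ℝ, 0 < r → HasDerivAt φ (φ' r) r)
    (hφ'c : ContinuousOn φ' (Set.Ioi 0))
    (F : ℝ → ℂ)
    (hF : ∀ l : ℝ, 0 < l →
      F l = ((l ^ (2 * s) / (Real.Gamma s * 4 ^ s) : ℝ) : ℂ) *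
        ∫ r in Set.Ioi (0:ℝ), ((r ^ (-s - 1) * Real.exp (-(l ^ 2) / (4 * r)) : ℝ) : ℂ) * φ r) :
    (∀ l : ℝ, 0 < l →
      deriv (deriv F) l + (((1 - 2 * s) / l : ℝ) : ℂ) * deriv F l
        = -((l ^ (2 * s) / (Real.Gamma s * 4 ^ s) : ℝ) : ℂ) *
            ∫ r in Set.Ioi (0:ℝ),
              φ' r * ((Real.exp (-(l ^ 2) / (4 * r)) * r ^ (-s - 1) : ℝ) : ℂ)) ∧
    (∀ l r : ℝ, 0 < l → 0 < r →
      HasDerivAt (fun ρ : ℝ => Real.exp (-(l ^ 2) / (4 * ρ)) * ρ ^ (-s - 1))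
        ((l ^ 2 / (4 * r ^ 2) - (s + 1) / r) * (Real.exp (-(l ^ 2) / (4 * r)) * r ^ (-s - 1)))
        r) := by
  obtain ⟨hs0, hs1⟩ := hs
  have hφc : ContinuousOn φ (Ioi 0) := fun r hr => ((hφd r hr).continuousAt).continuousWithinAt
  refine ⟨?_, fun l r _ hr => Stmt13Aux.hasDerivAt_kernel_r s l r hr⟩
  intro l hl
  set c : ℝ := Real.Gamma s * 4 ^ s with hc
  set J : ℝ → ℂ := fun x => ∫ r in Ioi (0:ℝ),
    ((r ^ (-s - 1) * Real.exp (-(x ^ 2) / (4 * r)) : ℝ) : ℂ) * φ r with hJ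
  set J1 : ℝ → ℂ := fun x => ∫ r in Ioi (0:ℝ),
    ((-(x / (2 * r)) * (r ^ (-s - 1) * Real.exp (-(x ^ 2) / (4 * r))) : ℝ) : ℂ) * φ r with hJ1
  set J2 : ℝ → ℂ := fun x => ∫ r in Ioi (0:ℝ),
    (((x ^ 2 / (4 * r ^ 2) - 1 / (2 * r)) *
      (r ^ (-s - 1) * Real.exp (-(x ^ 2) / (4 * r))) : ℝ) : ℂ) * φ r with hJ2
  have hJd : ∀ x : ℝ, 0 < x → HasDerivAt J (J1 x) x := fun x hx =>
    (Stmt13Aux.deriv_under_A s hs0 hs1 φ M hφ hφc x hx).2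
  have hJ1d : ∀ x : ℝ, 0 < x → HasDerivAt J1 (J2 x) x := fun x hx =>
    (Stmt13Aux.deriv_under_B s hs0 hs1 φ M hφ hφc x hx).2
  have hFd : ∀ x : ℝ, 0 < x → HasDerivAt F
      (((2 * s * x ^ (2 * s - 1) / c : ℝ) : ℂ) * J x + ((x ^ (2 * s) / c : ℝ) : ℂ) * J1 x) x := by
    intro x hx
    have hpow : HasDerivAt (fun y : ℝ => y ^ (2 * s) / c) (2 * s * x ^ (2 * s - 1) / c) x :=
      (Real.hasDerivAt_rpow_const (Or.inl hx.ne')).div_const c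
    have hprod := (hpow.ofReal_comp).mul (hJd x hx)
    apply hprod.congr_of_eventuallyEq
    filter_upwards [Ioi_mem_nhds hx] with y hy
    exact hF y hy
  have hd1 : deriv F l
      = ((2 * s * l ^ (2 * s - 1) / c : ℝ) : ℂ) * J l + ((l ^ (2 * s) / c : ℝ) : ℂ) * J1 l :=
    (hFd l hl).deriv
  have hG : deriv F =ᶠ[nhds l] fun x =>
      ((2 * s * x ^ (2 * s - 1) / c : ℝ) : ℂ) * J x + ((x ^ (2 * s) / c : ℝ) : ℂ) * J1 x := by
    filter_upwards [Ioi_mem_nhds hl] with x hx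
    exact (hFd x hx).deriv
  have hGd : HasDerivAt (fun x =>
      ((2 * s * x ^ (2 * s - 1) / c : ℝ) : ℂ) * J x + ((x ^ (2 * s) / c : ℝ) : ℂ) * J1 x)
      (((2 * s * ((2 * s - 1) * l ^ (2 * s - 1 - 1)) / c : ℝ) : ℂ) * J l
        + ((2 * s * l ^ (2 * s - 1) / c : ℝ) : ℂ) * J1 l
        + (((2 * s * l ^ (2 * s - 1) / c : ℝ) : ℂ) * J1 l
          + ((l ^ (2 * s) / c : ℝ) : ℂ) * J2 l)) l := by
    apply HasDerivAt.add
    · have hpow : HasDerivAt (fun y : ℝ => 2 * s * y ^ (2 * s - 1) / c)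
          (2 * s * ((2 * s - 1) * l ^ (2 * s - 1 - 1)) / c) l :=
        ((Real.hasDerivAt_rpow_const (Or.inl hl.ne')).const_mul (2 * s)).div_const c
      exact (hpow.ofReal_comp).mul (hJd l hl)
    · have hpow : HasDerivAt (fun y : ℝ => y ^ (2 * s) / c) (2 * s * l ^ (2 * s - 1) / c) l :=
        (Real.hasDerivAt_rpow_const (Or.inl hl.ne')).div_const c
      exact (hpow.ofReal_comp).mul (hJ1d l hl)
  have hd2 : deriv (deriv F) l
      = ((2 * s * ((2 * s - 1) * l ^ (2 * s - 1 - 1)) / c : ℝ) : ℂ) * J l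
        + ((2 * s * l ^ (2 * s - 1) / c : ℝ) : ℂ) * J1 l
        + (((2 * s * l ^ (2 * s - 1) / c : ℝ) : ℂ) * J1 l
          + ((l ^ (2 * s) / c : ℝ) : ℂ) * J2 l) := by
    rw [hG.deriv_eq]
    exact hGd.deriv
  have hintA := (Stmt13Aux.deriv_under_A s hs0 hs1 φ M hφ hφc l hl).1
  have hintB := (Stmt13Aux.deriv_under_B s hs0 hs1 φ M hφ hφc l hl).1
  have hE : J2 l + (((2 * s + 1) / l : ℝ) : ℂ) * J1 l
      = ∫ r in Ioi (0:ℝ),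
          (((l ^ 2 / (4 * r ^ 2) - (s + 1) / r) *
            (Real.exp (-(l ^ 2) / (4 * r)) * r ^ (-s - 1)) : ℝ) : ℂ) * φ r := by
    rw [hJ2, hJ1]
    simp only
    rw [← integral_const_mul, ← integral_add hintB (hintA.const_mul _)]
    apply setIntegral_congr_fun measurableSet_Ioi
    intro r hr
    have hr0 : 0 < r := hr
    have hreal : (l ^ 2 / (4 * r ^ 2) - 1 / (2 * r)) *
          (r ^ (-s - 1) * Real.exp (-(l ^ 2) / (4 * r)))
        + (2 * s + 1) / l * (-(l / (2 * r)) * (r ^ (-s - 1) * Real.exp (-(l ^ 2) / (4 * r))))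
        = (l ^ 2 / (4 * r ^ 2) - (s + 1) / r) *
          (Real.exp (-(l ^ 2) / (4 * r)) * r ^ (-s - 1)) := by
      field_simp
      ring
    simp only
    rw [← hreal]
    push_cast
    ring
  have hibp := Stmt13Aux.ibp s hs0 hs1 φ φ' M hφ hφ' hφd hφ'c l hl
  have hcomm : (∫ r in Ioi (0:ℝ), φ' r * ((Real.exp (-(l ^ 2) / (4 * r)) * r ^ (-s - 1) : ℝ) : ℂ))
      = ∫ r in Ioi (0:ℝ), ((Real.exp (-(l ^ 2) / (4 * r)) * r ^ (-s - 1) : ℝ) : ℂ) * φ' r := by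
    apply integral_congr_ae
    filter_upwards with r
    ring
  rw [hd1, hd2, hcomm]
  have hx : (∫ r in Ioi (0:ℝ), ((Real.exp (-(l ^ 2) / (4 * r)) * r ^ (-s - 1) : ℝ) : ℂ) * φ' r)
      = -(J2 l + (((2 * s + 1) / l : ℝ) : ℂ) * J1 l) := by
    rw [hE, hibp]; ring
  rw [hx]
  have e1 : l ^ (2 * s - 1) = l ^ (2 * s) / l := by
    rw [Real.rpow_sub hl, Real.rpow_one]
  have e2 : l ^ (2 * s - 1 - 1) = l ^ (2 * s) / l / l := by
    rw [Real.rpow_sub hl, Real.rpow_sub hl, Real.rpow_one]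
  rw [e1, e2]
  push_cast
  ring

end Stmt13AuxSection
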